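/- Fix s ≥ 1 and P_s = {a_1,…,a_s, c | a_i < c}, and let M((m,p),(n,q)) denote the number of words in {a^{n−q}c^q} (words of length n with q letters c and n−q letters among the a_i) that lie above a_1^{m−p}c^p in the generalized subword order. Then for 1 ≤ p ≤ m ≤ n and p ≤ q ≤ n: M((m,p),(n,q)) = Σ_{i=0}^{n−m} M((m−1,p−1),(n−1−i,q−1)) · s^i. -/

import Mathlib

/-- The alphabet `P_s = {a_1, …, a_s, c}` with `a_i < c`: `some i` is `a_i`, `none` is `c`. -/
abbrev Letter (s : ℕ) := Option (Fin s)

/-- The generalized subword order on words over `P_s`. -/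
def WLE {s : ℕ} (u w : List (Letter s)) : Prop :=
  ∃ w', w'.Sublist w ∧ List.Forall₂ (fun x y => x = y ∨ y = none) u w'

/-- `M((m,p),(n,q))`: the number of words of length `n` with exactly `q` letters `c`
lying above `a_1^{m−p} c^p` in the generalized subword order. -/
noncomputable def M (s : ℕ) (hs : 1 ≤ s) (m p n q : ℕ) : ℕ :=
  {w : List (Letter s) | w.length = n ∧ w.count (none : Letter s) = q ∧
    WLE (List.replicate (m - p) (some (⟨0, hs⟩ : Fin s)) ++
      List.replicate p (none : Letter s)) w}.ncard

section aux

open List Set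

/-- every list containing `a` splits at the last occurrence of `a`. -/
lemma exists_split {α : Type*} {a : α} {w : List α} (hw : a ∈ w) :
    ∃ w' v, w = w' ++ a :: v ∧ a ∉ v := by
  induction w with
  | nil => simp at hw
  | cons x t ih =>
    by_cases h : a ∈ t
    · obtain ⟨w', v, rfl, hv⟩ := ih h
      exact ⟨x :: w', v, rfl, hv⟩
    · have hx : x = a := by
        rcases mem_cons.mp hw with h' | h'
        · exact h'.symm
        · exact absurd h' h
      exact ⟨[], t, by simp [hx], h⟩

lemma suffix_helper {α : Type*} {a : α} {v₁ v₂ : List α}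
    (h : (a :: v₁) <:+ (a :: v₂)) (h₂ : a ∉ v₂) : v₁ = v₂ := by
  obtain ⟨t, ht⟩ := h
  cases t with
  | nil => simpa using ht
  | cons b t' =>
    exfalso
    apply h₂
    have : b :: (t' ++ a :: v₁) = a :: v₂ := by simpa using ht
    have hv : v₂ = t' ++ a :: v₁ := by
      injection this with _ h2; exact h2.symm
    simp [hv]

lemma split_unique {α : Type*} {a : α} {w₁ v₁ w₂ v₂ : List α}
    (h : w₁ ++ a :: v₁ = w₂ ++ a :: v₂) (h₁ : a ∉ v₁) (h₂ : a ∉ v₂) :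
    w₁ = w₂ ∧ v₁ = v₂ := by
  have hs₁ : (a :: v₁) <:+ (w₂ ++ a :: v₂) := ⟨w₁, h⟩
  have hs₂ : (a :: v₂) <:+ (w₂ ++ a :: v₂) := ⟨w₂, rfl⟩
  have hv : v₁ = v₂ := by
    rcases List.suffix_or_suffix_of_suffix hs₁ hs₂ with h' | h'
    · exact suffix_helper h' h₂
    · exact (suffix_helper h' h₁).symm
  subst hv
  exact ⟨List.append_cancel_right h, rfl⟩

lemma map_some_reduceOption {α : Type*} {v : List (Option α)} (h : none ∉ v) :
    (v.reduceOption).map some = v := by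
  induction v with
  | nil => simp
  | cons x t ih =>
    cases x with
    | none => simp at h
    | some b =>
      have ht : none ∉ t := fun hm => h (mem_cons_of_mem _ hm)
      simp [List.reduceOption_cons_of_some, ih ht]

/-- appending `c`-block preserves the order. -/
lemma wle_append {s : ℕ} {u' w' v : List (Letter s)} (h : WLE u' w') :
    WLE (u' ++ [none]) (w' ++ none :: v) := by
  obtain ⟨w₀, hsub, hf⟩ := h
  refine ⟨w₀ ++ [none], ?_, ?_⟩
  · exact hsub.append ((List.singleton_sublist).mpr List.mem_cons_self)
  · exact List.rel_append hf (List.Forall₂.cons (Or.inl rfl) List.Forall₂.nil)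

lemma wle_split {s : ℕ} {u' w' v : List (Letter s)} (hv : (none : Letter s) ∉ v)
    (h : WLE (u' ++ [none]) (w' ++ none :: v)) :
    WLE u' w' ∧ u'.length ≤ w'.length := by
  obtain ⟨w₀, hsub, hf⟩ := h
  -- split w₀ according to the Forall₂
  have hlen : (u' ++ [none]).length = w₀.length := hf.length_eq
  set w₁ := w₀.take u'.length with hw₁
  have hf₁ : List.Forall₂ (fun x y => x = y ∨ y = none) u' w₁ := by
    have := List.forall₂_take u'.length hf
    rwa [List.take_left] at this
  have hf₂ : List.Forall₂ (fun x y => x = y ∨ y = none) [none] (w₀.drop u'.length) := by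
    have := List.forall₂_drop u'.length hf
    rwa [List.drop_left] at this
  have hdrop : w₀.drop u'.length = [(none : Letter s)] := by
    rcases List.forall₂_cons_left_iff.mp hf₂ with ⟨y, t, hy, ht, heq⟩
    have : y = none := hy.elim (fun h' => h'.symm) id
    rw [List.forall₂_nil_left_iff.mp ht] at heq
    rw [heq, this]
  have hw₀ : w₀ = w₁ ++ [none] := by
    rw [hw₁, ← hdrop, List.take_append_drop]
  rw [hw₀] at hsub
  -- w₁ ++ [none] <+ (w' ++ [none]) ++ v
  have hsub' : (w₁ ++ [none]).Sublist ((w' ++ [none]) ++ v) := by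
    simpa using hsub
  rcases List.sublist_append_iff.mp hsub' with ⟨l₁, l₂, heq, hl₁, hl₂⟩
  have hl₂nil : l₂ = [] := by
    rcases List.eq_nil_or_concat l₂ with rfl | ⟨l₂', y, rfl⟩
    · rfl
    · exfalso
      have : w₁ ++ [none] = (l₁ ++ l₂') ++ [y] := by
        rw [heq]; simp [List.concat_eq_append]
      have hy : y = (none : Letter s) := by
        have := (List.append_inj' this rfl).2
        simpa using this.symm
      apply hv
      have : (none : Letter s) ∈ l₂' ++ [y] := by simp [hy]
      rw [← List.concat_eq_append] at this
      exact hl₂.subset this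
  rw [hl₂nil, List.append_nil] at heq
  rw [← heq] at hl₁
  -- w₁ ++ [none] <+ w' ++ [none] implies w₁ <+ w'
  have hw₁w' : w₁.Sublist w' := by
    have hrev := hl₁.reverse
    simp only [List.reverse_append, List.reverse_singleton, List.singleton_append] at hrev
    have := List.cons_sublist_cons.mp hrev
    simpa using this.reverse
  constructor
  · exact ⟨w₁, hw₁w', hf₁⟩
  · calc u'.length = w₁.length := hf₁.length_eq
      _ ≤ w'.length := hw₁w'.length_le

lemma ncard_prod {α β : Type*} (A : Set α) (B : Set β) :
    (A ×ˢ B).ncard = A.ncard * B.ncard := by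
  rw [← Nat.card_coe_set_eq, ← Nat.card_coe_set_eq, ← Nat.card_coe_set_eq,
    Nat.card_congr (Equiv.Set.prod A B), Nat.card_prod]

lemma ncard_length_eq (α : Type*) [Fintype α] (i : ℕ) :
    {l : List α | l.length = i}.ncard = (Fintype.card α) ^ i := by
  induction i with
  | zero =>
    have : {l : List α | l.length = 0} = {[]} := by
      ext l; simp [List.length_eq_zero_iff]
    rw [this, Set.ncard_singleton, pow_zero]
  | succ i ih =>
    have himg : {l : List α | l.length = i + 1} =
        (fun p : α × List α => p.1 :: p.2) '' (Set.univ ×ˢ {l : List α | l.length = i}) := by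
      ext l
      constructor
      · intro hl
        cases l with
        | nil => simp at hl
        | cons x t =>
          exact ⟨(x, t), by simpa using Nat.succ_injective hl, rfl⟩
      · rintro ⟨⟨x, t⟩, ht, rfl⟩
        simp only [Set.mem_setOf_eq, List.length_cons]
        have : t.length = i := by simpa using ht.2
        omega
    rw [himg, Set.ncard_image_of_injOn, _root_.ncard_prod, Set.ncard_univ, ih,
      Nat.card_eq_fintype_card, pow_succ]
    · ring
    · rintro ⟨x₁, t₁⟩ - ⟨x₂, t₂⟩ - h
      simpa [Prod.ext_iff] using List.cons_eq_cons.mp h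

lemma ncard_biUnion {α ι : Type*} (t : Finset ι) (f : ι → Set α)
    (hf : ∀ i ∈ t, (f i).Finite)
    (hdisj : ∀ i ∈ t, ∀ j ∈ t, i ≠ j → Disjoint (f i) (f j)) :
    (⋃ i ∈ t, f i).ncard = ∑ i ∈ t, (f i).ncard := by
  classical
  induction t using Finset.induction_on with
  | empty => simp
  | @insert a t ha ih =>
    have hUf : (⋃ i ∈ t, f i).Finite :=
      Set.Finite.biUnion t.finite_toSet (fun i hi => hf i (Finset.mem_insert_of_mem hi))
    have hd : Disjoint (f a) (⋃ i ∈ t, f i) := by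
      rw [Set.disjoint_iUnion_right]
      intro i
      rw [Set.disjoint_iUnion_right]
      intro hi
      exact hdisj a (Finset.mem_insert_self a t) i (Finset.mem_insert_of_mem hi)
        (fun h => ha (h ▸ hi))
    rw [Finset.set_biUnion_insert, Finset.sum_insert ha,
      Set.ncard_union_eq hd (hf a (Finset.mem_insert_self a t)) hUf,
      ih (fun i hi => hf i (Finset.mem_insert_of_mem hi))
        (fun i hi j hj hij => hdisj i (Finset.mem_insert_of_mem hi) j
          (Finset.mem_insert_of_mem hj) hij)]

end aux

/-- For `1 ≤ p ≤ m ≤ n` and `p ≤ q ≤ n`: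
`M((m,p),(n,q)) = Σ_{i=0}^{n−m} M((m−1,p−1),(n−1−i,q−1)) · s^i`. -/
theorem M_recurrence (s : ℕ) (hs : 1 ≤ s) (m p n q : ℕ)
    (hp : 1 ≤ p) (hpm : p ≤ m) (hmn : m ≤ n) (hpq : p ≤ q) (hqn : q ≤ n) :
    M s hs m p n q = ∑ i ∈ Finset.range (n - m + 1), M s hs (m - 1) (p - 1) (n - 1 - i) (q - 1) * s ^ i := by
  classical
  set a : Letter s := some (⟨0, hs⟩ : Fin s) with ha
  set u' : List (Letter s) := List.replicate (m - p) a ++ List.replicate (p - 1) none with hu'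
  have hu'len : u'.length = m - 1 := by
    simp only [hu', List.length_append, List.length_replicate]
    omega
  -- the full pattern
  have hu : List.replicate (m - p) a ++ List.replicate p (none : Letter s)
      = u' ++ [none] := by
    rw [hu', List.append_assoc]
    congr 1
    conv_lhs => rw [show p = (p - 1) + 1 by omega]
    rw [List.replicate_succ']
  -- the sets
  set S : Set (List (Letter s)) := {w | w.length = n ∧ w.count (none : Letter s) = q ∧
    WLE (u' ++ [none]) w} with hS
  set A : ℕ → Set (List (Letter s) × List (Fin s)) := fun i =>
    {w' | w'.length = n - 1 - i ∧ w'.count (none : Letter s) = q - 1 ∧ WLE u' w'} ×ˢ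
      {v : List (Fin s) | v.length = i} with hA
  set g : List (Letter s) × List (Fin s) → List (Letter s) :=
    fun p => p.1 ++ none :: p.2.map some with hg
  -- membership computations for images
  have himg_mem : ∀ i ∈ Finset.range (n - m + 1), ∀ w ∈ g '' (A i),
      w.length = n ∧ w.count (none : Letter s) = q ∧ WLE (u' ++ [none]) w ∧
      ∃ w' v, w = w' ++ none :: v ∧ (none : Letter s) ∉ v ∧ v.length = i := by
    rintro i hi w ⟨⟨w', v⟩, ⟨⟨hw'len, hw'count, hw'le⟩, hvlen⟩, rfl⟩
    simp only [Set.mem_setOf_eq] at hvlen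
    have hirange : i ≤ n - m := by
      simpa using Finset.mem_range_succ_iff.mp hi
    have hnone_not : (none : Letter s) ∉ v.map some := by simp
    refine ⟨?_, ?_, ?_, w', v.map some, rfl, hnone_not, by simpa using hvlen⟩
    · simp only [hg, List.length_append, List.length_cons, List.length_map, hw'len, hvlen]
      omega
    · simp only [hg]
      rw [List.count_append, List.count_cons_self, List.count_eq_zero.mpr hnone_not, hw'count]
      omega
    · exact wle_append hw'le
  -- S is the disjoint union of the images
  have hSunion : S = ⋃ i ∈ Finset.range (n - m + 1), g '' (A i) := by
    ext w
    simp only [Set.mem_iUnion, hS, Set.mem_setOf_eq]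
    constructor
    · rintro ⟨hwlen, hwcount, hwle⟩
      have hnone_mem : (none : Letter s) ∈ w := by
        rw [← List.count_pos_iff]
        omega
      obtain ⟨w', v, rfl, hv⟩ := exists_split hnone_mem
      obtain ⟨hle', hlen'⟩ := wle_split hv hwle
      simp only [List.length_append, List.length_cons] at hwlen
      rw [hu'len] at hlen'
      have hile : v.length ≤ n - m := by omega
      have h1 : w'.length = n - 1 - v.length := by omega
      have h2 : w'.count (none : Letter s) = q - 1 := by
        rw [List.count_append, List.count_cons_self, List.count_eq_zero.mpr hv] at hwcount
        omega
      have h3 : (v.reduceOption).length = v.length := by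
        have := congrArg List.length (map_some_reduceOption hv)
        simpa using this
      have hmem : (w', v.reduceOption) ∈ A v.length := ⟨⟨h1, h2, hle'⟩, h3⟩
      have hgw : g (w', v.reduceOption) = w' ++ none :: v := by
        simp only [hg]
        rw [map_some_reduceOption hv]
      exact ⟨v.length, Finset.mem_range_succ_iff.mpr hile,
        hgw ▸ Set.mem_image_of_mem g hmem⟩
    · rintro ⟨i, hi, hw⟩
      obtain ⟨h1, h2, h3, -⟩ := himg_mem i hi _ hw
      exact ⟨h1, h2, h3⟩
  -- finiteness
  have hfin : ∀ i ∈ Finset.range (n - m + 1), (g '' (A i)).Finite := by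
    intro i hi
    apply Set.Finite.subset (List.finite_length_eq (Letter s) n)
    intro w hw
    exact (himg_mem i hi w hw).1
  -- disjointness
  have hdisj : ∀ i ∈ Finset.range (n - m + 1), ∀ j ∈ Finset.range (n - m + 1),
      i ≠ j → Disjoint (g '' (A i)) (g '' (A j)) := by
    intro i hi j hj hij
    rw [Set.disjoint_left]
    intro w hwi hwj
    obtain ⟨-, -, -, w₁, v₁, heq₁, hv₁, hl₁⟩ := himg_mem i hi w hwi
    obtain ⟨-, -, -, w₂, v₂, heq₂, hv₂, hl₂⟩ := himg_mem j hj w hwj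
    rw [heq₁] at heq₂
    obtain ⟨-, rfl⟩ := split_unique heq₂ hv₁ hv₂
    exact hij (hl₁ ▸ hl₂ ▸ rfl)
  -- injectivity on each A i
  have hinj : ∀ i, Set.InjOn g (A i) := by
    intro i
    rintro ⟨w₁, v₁⟩ ⟨⟨-, -, -⟩, -⟩ ⟨w₂, v₂⟩ ⟨⟨-, -, -⟩, -⟩ heq
    simp only [hg] at heq
    obtain ⟨hw, hv⟩ := split_unique heq (by simp) (by simp)
    have : v₁ = v₂ := List.map_injective_iff.mpr (Option.some_injective _) hv
    simp [hw, this]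
  -- card of A i
  have hAcard : ∀ i, (A i).ncard = M s hs (m - 1) (p - 1) (n - 1 - i) (q - 1) * s ^ i := by
    intro i
    rw [hA]
    rw [ncard_prod]
    congr 1
    · unfold M
      congr 2
      have : m - 1 - (p - 1) = m - p := by omega
      rw [this, ← hu']
    · rw [ncard_length_eq]
      simp
  -- conclude
  have hM : M s hs m p n q = S.ncard := by
    unfold M
    rw [hu]
  rw [hM, hSunion, ncard_biUnion _ _ hfin hdisj]
  apply Finset.sum_congr rfl
  intro i hi
  rw [Set.ncard_image_of_injOn (hinj i), hAcard i]
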